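/- Let 𝓕 be a finite nonempty family of finite simple graphs, each having at most q ≥ 1 vertices, and let G_1,…,G_t be finite simple graphs on a common finite vertex set V. For every integer k ≥ 0, the number of sets S ⊆ V with |S| ≤ k that are inclusion-wise minimal with the property that G_i − S is 𝓕-free for every i ∈ {1,…,t} is at most q^k. -/

import Mathlib

/-- A graph `G` is `𝓕`-free (for a family `H` of graphs indexed by `ι`) if no induced
subgraph of `G` is isomorphic to a member of the family. -/
def FFree {ι : Type*} {W : ι → Type*} (H : ∀ i, SimpleGraph (W i))
    {V : Type*} (G : SimpleGraph V) : Prop :=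
  ∀ i, ∀ A : Set V, IsEmpty (G.induce A ≃g H i)

noncomputable def induceInduceIso {V : Type*} (G : SimpleGraph V) (X : Set V) (A : Set X) :
    (G.induce X).induce A ≃g G.induce (Subtype.val '' A) where
  toEquiv := Equiv.Set.image Subtype.val A Subtype.val_injective
  map_rel_iff' := Iff.rfl

lemma ffree_induce_iff {ι : Type*} {W : ι → Type*} (H : ∀ i, SimpleGraph (W i))
    {V : Type*} (G : SimpleGraph V) (X : Set V) :
    FFree H (G.induce X) ↔ ∀ i (B : Set V), B ⊆ X → IsEmpty (G.induce B ≃g H i) := by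
  constructor
  · intro h i B hB
    constructor
    intro f
    set A : Set X := Subtype.val ⁻¹' B with hA
    have himg : Subtype.val '' A = B := by
      rw [hA, Subtype.image_preimage_coe]
      exact Set.inter_eq_self_of_subset_right hB
    have iso : (G.induce X).induce A ≃g H i :=
      (induceInduceIso G X A).trans (by rw [himg]; exact f)
    exact (h i A).false iso
  · intro h i A
    constructor
    intro f
    have iso : G.induce (Subtype.val '' A) ≃g H i :=
      (induceInduceIso G X A).symm.trans f
    exact (h i (Subtype.val '' A) (Subtype.coe_image_subset X A)).false iso

lemma ncard_biUnion_le_mul {α β : Type*} (e : Finset α) (f : α → Set β) (c : ℕ)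
    (hc : ∀ v, (f v).ncard ≤ c) : (⋃ v ∈ e, f v).ncard ≤ e.card * c := by
  classical
  induction e using Finset.induction with
  | empty => simp
  | @insert a s ha ih =>
    rw [Finset.set_biUnion_insert]
    calc (f a ∪ ⋃ v ∈ s, f v).ncard
        ≤ (f a).ncard + (⋃ v ∈ s, f v).ncard := Set.ncard_union_le _ _
      _ ≤ c + s.card * c := Nat.add_le_add (hc a) ih
      _ = (insert a s).card * c := by rw [Finset.card_insert_of_notMem ha]; ring

lemma key_count {V : Type*} [Fintype V] [DecidableEq V] (q : ℕ) (hq : 1 ≤ q) :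
    ∀ (k : ℕ) (P : Finset V → Prop)
      (_ : ∀ ⦃S T : Finset V⦄, S ⊆ T → P S → P T)
      (_ : ∀ S : Finset V, ¬ P S →
        ∃ e : Finset V, e.card ≤ q ∧ Disjoint e S ∧ ∀ T, P T → ¬ Disjoint e T),
      {S : Finset V | S.card ≤ k ∧ P S ∧ ∀ S' ⊂ S, ¬ P S'}.ncard ≤ q ^ k := by
  intro k
  induction k with
  | zero =>
    intro P mono wit
    have hsub : {S : Finset V | S.card ≤ 0 ∧ P S ∧ ∀ S' ⊂ S, ¬ P S'} ⊆ {(∅ : Finset V)} := by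
      intro S hS
      simp only [Set.mem_setOf_eq] at hS
      have : S = ∅ := Finset.card_eq_zero.mp (Nat.le_zero.mp hS.1)
      simp [this]
    calc {S : Finset V | S.card ≤ 0 ∧ P S ∧ ∀ S' ⊂ S, ¬ P S'}.ncard
        ≤ ({(∅ : Finset V)} : Set (Finset V)).ncard :=
          Set.ncard_le_ncard hsub (Set.finite_singleton _)
      _ = 1 := Set.ncard_singleton _
      _ ≤ q ^ 0 := by simp
  | succ k ih =>
    intro P mono wit
    by_cases hP0 : P ∅
    · have hsub : {S : Finset V | S.card ≤ k + 1 ∧ P S ∧ ∀ S' ⊂ S, ¬ P S'}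
          ⊆ {(∅ : Finset V)} := by
        intro S hS
        simp only [Set.mem_setOf_eq] at hS
        simp only [Set.mem_singleton_iff]
        by_contra hne
        exact hS.2.2 ∅ (Finset.empty_ssubset.mpr (Finset.nonempty_iff_ne_empty.mpr hne)) hP0
      calc {S : Finset V | S.card ≤ k + 1 ∧ P S ∧ ∀ S' ⊂ S, ¬ P S'}.ncard
          ≤ ({(∅ : Finset V)} : Set (Finset V)).ncard :=
            Set.ncard_le_ncard hsub (Set.finite_singleton _)
        _ = 1 := Set.ncard_singleton _
        _ ≤ q ^ (k + 1) := Nat.one_le_pow _ _ hq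
    · obtain ⟨e, hecard, -, hehit⟩ := wit ∅ hP0
      set f : V → Set (Finset V) := fun v =>
        (insert v) '' {T : Finset V | T.card ≤ k ∧ P (insert v T) ∧ ∀ T' ⊂ T, ¬ P (insert v T')}
        with hf
      have hsub : {S : Finset V | S.card ≤ k + 1 ∧ P S ∧ ∀ S' ⊂ S, ¬ P S'}
          ⊆ ⋃ v ∈ e, f v := by
        intro S hS
        simp only [Set.mem_setOf_eq] at hS
        obtain ⟨v, hve, hvS⟩ := Finset.not_disjoint_iff.mp (hehit S hS.2.1)
        refine Set.mem_biUnion hve ?_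
        refine ⟨S.erase v, ⟨?_, ?_, ?_⟩, Finset.insert_erase hvS⟩
        · rw [Finset.card_erase_of_mem hvS]
          exact Nat.sub_le_sub_right hS.1 1
        · rw [Finset.insert_erase hvS]; exact hS.2.1
        · intro T' hT'
          have hvT' : v ∉ T' := fun h => Finset.notMem_erase v S (hT'.subset h)
          have hss : insert v T' ⊂ S := by
            rw [Finset.ssubset_def]
            constructor
            · exact Finset.insert_subset hvS (hT'.subset.trans (Finset.erase_subset v S))
            · intro hc
              obtain ⟨x, hx1, hx2⟩ := Finset.exists_of_ssubset hT'
              have hxS : x ∈ S := Finset.mem_of_mem_erase hx1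
              have := hc hxS
              rcases Finset.mem_insert.mp this with h | h
              · exact (Finset.ne_of_mem_erase hx1) h
              · exact hx2 h
          exact hS.2.2 _ hss
      have hcount : ∀ v, (f v).ncard ≤ q ^ k := by
        intro v
        calc (f v).ncard
            ≤ {T : Finset V | T.card ≤ k ∧ P (insert v T) ∧ ∀ T' ⊂ T, ¬ P (insert v T')}.ncard :=
              Set.ncard_image_le (Set.toFinite _)
          _ ≤ q ^ k := by
              apply ih
              · intro S T hST h
                exact mono (Finset.insert_subset_insert v hST) h
              · intro T hT
                obtain ⟨e', he'card, he'dis, he'hit⟩ := wit (insert v T) hT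
                refine ⟨e', he'card, Finset.disjoint_of_subset_right (Finset.subset_insert v T) he'dis, ?_⟩
                intro T' hT' hdis
                have hve' : v ∉ e' := fun h =>
                  Finset.disjoint_left.mp he'dis h (Finset.mem_insert_self v T)
                apply he'hit (insert v T') hT'
                rw [Finset.disjoint_insert_right]
                exact ⟨hve', hdis⟩
      calc {S : Finset V | S.card ≤ k + 1 ∧ P S ∧ ∀ S' ⊂ S, ¬ P S'}.ncard
          ≤ (⋃ v ∈ e, f v).ncard := Set.ncard_le_ncard hsub (Set.toFinite _)
        _ ≤ e.card * q ^ k := ncard_biUnion_le_mul e f _ hcount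
        _ ≤ q * q ^ k := Nat.mul_le_mul_right _ hecard
        _ = q ^ (k + 1) := by ring

theorem stmt_11 {ι : Type*} [Fintype ι] [Nonempty ι]
    {W : ι → Type*} [∀ i, Fintype (W i)] (H : ∀ i, SimpleGraph (W i))
    (q : ℕ) (hq : 1 ≤ q) (hWcard : ∀ i, Fintype.card (W i) ≤ q)
    {V : Type*} [Fintype V] (t : ℕ) (G : Fin t → SimpleGraph V) (k : ℕ) :
    {S : Finset V | S.card ≤ k ∧
      (∀ i, FFree H ((G i).induce ((S : Set V)ᶜ))) ∧
      ∀ S' ⊂ S, ¬ (∀ i, FFree H ((G i).induce ((S' : Set V)ᶜ)))}.ncard ≤ q ^ k := by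
  classical
  set P : Finset V → Prop := fun S => ∀ i, FFree H ((G i).induce ((S : Set V)ᶜ)) with hP
  have mono : ∀ ⦃S T : Finset V⦄, S ⊆ T → P S → P T := by
    intro S T hST h i
    have hcs : ((T : Set V)ᶜ : Set V) ⊆ ((S : Set V)ᶜ : Set V) :=
      Set.compl_subset_compl.mpr (Finset.coe_subset.mpr hST)
    rw [ffree_induce_iff]
    intro j B hB
    exact (ffree_induce_iff H (G i) _).mp (h i) j B (hB.trans hcs)
  have wit : ∀ S : Finset V, ¬ P S →
      ∃ e : Finset V, e.card ≤ q ∧ Disjoint e S ∧ ∀ T, P T → ¬ Disjoint e T := by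
    intro S hS
    rw [hP] at hS
    obtain ⟨i, hi⟩ := not_forall.mp hS
    rw [ffree_induce_iff] at hi
    push_neg at hi
    obtain ⟨j, B, hBsub, hBne⟩ := hi
    obtain ⟨f⟩ := hBne
    have hBfin : B.Finite := Set.toFinite B
    refine ⟨hBfin.toFinset, ?_, ?_, ?_⟩
    · have h1 : B.ncard = Fintype.card (W j) := by
        rw [Set.ncard_eq_toFinset_card' B]
        rw [Set.toFinset_card]
        exact Fintype.card_congr f.toEquiv
      rw [Set.ncard_eq_toFinset_card B hBfin] at h1
      rw [h1]
      exact hWcard j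
    · rw [Finset.disjoint_left]
      intro a ha haS
      exact (hBsub (hBfin.mem_toFinset.mp ha)) (by simpa using haS)
    · intro T hT hdis
      have hBT : B ⊆ ((T : Set V)ᶜ : Set V) := by
        intro x hx
        have := Finset.disjoint_left.mp hdis (hBfin.mem_toFinset.mpr hx)
        simpa using this
      exact ((ffree_induce_iff H (G i) _).mp (hT i) j B hBT).false f
  exact key_count q hq k P mono wit
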